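/- Let P be a column-stochastic primitive n×n matrix with y[t] = P^t 1 having positive entries, Q[t] = diag(y[t+1])^{-1} P diag(y[t]), and Φ(t,s) = Q[t]⋯Q[s]. Then for every fixed s ≥ 0, lim_{t→∞} Φ(t,s) = (1/n) 1 y[s]^T, and this limit matrix is row-stochastic. -/

import Mathlib

open Matrix Finset Filter

lemma rowsum_pow {n : ℕ} (A : Matrix (Fin n) (Fin n) ℝ) (h : ∀ i, ∑ j, A i j = 1) :
    ∀ k i, ∑ j, (A ^ k) i j = 1 := by
  intro k
  induction k with
  | zero => intro i; simp [Matrix.one_apply]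
  | succ k ih =>
      intro i
      rw [pow_succ]
      simp only [Matrix.mul_apply]
      rw [Finset.sum_comm]
      calc ∑ l, ∑ j, (A ^ k) i l * A l j = ∑ l, (A ^ k) i l * ∑ j, A l j := by
            simp [Finset.mul_sum]
        _ = 1 := by simp [h, ih]

lemma colsum_pow {n : ℕ} (P : Matrix (Fin n) (Fin n) ℝ) (h : ∀ j, ∑ i, P i j = 1) :
    ∀ k j, ∑ i, (P ^ k) i j = 1 := by
  intro k j
  have := rowsum_pow Pᵀ (fun i => by simpa using h i) k j
  simpa [← Matrix.transpose_pow, Matrix.transpose_apply] using this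

lemma mulVec_le_sup' {n : ℕ} [Nonempty (Fin n)] (A : Matrix (Fin n) (Fin n) ℝ)
    (hA0 : ∀ i j, 0 ≤ A i j) (hA1 : ∀ i, ∑ j, A i j = 1) (x : Fin n → ℝ) (i : Fin n) :
    (A *ᵥ x) i ≤ univ.sup' univ_nonempty x := by
  have : (A *ᵥ x) i = ∑ j, A i j * x j := rfl
  rw [this]
  calc ∑ j, A i j * x j ≤ ∑ j, A i j * univ.sup' univ_nonempty x := by
        refine Finset.sum_le_sum fun j _ => ?_
        exact mul_le_mul_of_nonneg_left (Finset.le_sup' x (Finset.mem_univ j)) (hA0 i j)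
    _ = univ.sup' univ_nonempty x := by rw [← Finset.sum_mul, hA1, one_mul]

lemma inf'_le_mulVec {n : ℕ} [Nonempty (Fin n)] (A : Matrix (Fin n) (Fin n) ℝ)
    (hA0 : ∀ i j, 0 ≤ A i j) (hA1 : ∀ i, ∑ j, A i j = 1) (x : Fin n → ℝ) (i : Fin n) :
    univ.inf' univ_nonempty x ≤ (A *ᵥ x) i := by
  have : (A *ᵥ x) i = ∑ j, A i j * x j := rfl
  rw [this]
  calc univ.inf' univ_nonempty x = ∑ j, A i j * univ.inf' univ_nonempty x := by
        rw [← Finset.sum_mul, hA1, one_mul]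
    _ ≤ ∑ j, A i j * x j := by
        refine Finset.sum_le_sum fun j _ => ?_
        exact mul_le_mul_of_nonneg_left (Finset.inf'_le x (Finset.mem_univ j)) (hA0 i j)

lemma osc_contract {n : ℕ} [Nonempty (Fin n)] (B : Matrix (Fin n) (Fin n) ℝ) (δ : ℝ)
    (hB1 : ∀ i, ∑ j, B i j = 1) (hδ : ∀ i j, δ ≤ B i j) (x : Fin n → ℝ) :
    univ.sup' univ_nonempty (B *ᵥ x) - univ.inf' univ_nonempty (B *ᵥ x) ≤
      (1 - n * δ) * (univ.sup' univ_nonempty x - univ.inf' univ_nonempty x) := by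
  set S := univ.sup' univ_nonempty x with hS
  set I := univ.inf' univ_nonempty x with hI
  have hsub : ∀ i : Fin n, ∑ j, (B i j - δ) = 1 - n * δ := by
    intro i
    rw [Finset.sum_sub_distrib, hB1]
    simp [mul_comm]
  have hup : ∀ i, (B *ᵥ x) i ≤ (1 - n * δ) * S + δ * ∑ j, x j := by
    intro i
    have : (B *ᵥ x) i = ∑ j, ((B i j - δ) * x j + δ * x j) := by
      simp [Matrix.mulVec, dotProduct]; ring_nf
    rw [this, Finset.sum_add_distrib, ← Finset.mul_sum]
    gcongr ?_ + _
    calc ∑ j, (B i j - δ) * x j ≤ ∑ j, (B i j - δ) * S := by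
          refine Finset.sum_le_sum fun j _ => ?_
          exact mul_le_mul_of_nonneg_left (Finset.le_sup' x (Finset.mem_univ j))
            (sub_nonneg.2 (hδ i j))
      _ = (1 - n * δ) * S := by rw [← Finset.sum_mul, hsub]
  have hlo : ∀ i, (1 - n * δ) * I + δ * ∑ j, x j ≤ (B *ᵥ x) i := by
    intro i
    have : (B *ᵥ x) i = ∑ j, ((B i j - δ) * x j + δ * x j) := by
      simp [Matrix.mulVec, dotProduct]
      exact Finset.sum_congr rfl fun j _ => by ring
    rw [this, Finset.sum_add_distrib, ← Finset.mul_sum]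
    gcongr ?_ + _
    calc (1 - n * δ) * I = ∑ j, (B i j - δ) * I := by rw [← Finset.sum_mul, hsub]
      _ ≤ ∑ j, (B i j - δ) * x j := by
          refine Finset.sum_le_sum fun j _ => ?_
          exact mul_le_mul_of_nonneg_left (Finset.inf'_le x (Finset.mem_univ j))
            (sub_nonneg.2 (hδ i j))
  have h1 : univ.sup' univ_nonempty (B *ᵥ x) ≤ (1 - n * δ) * S + δ * ∑ j, x j :=
    Finset.sup'_le _ _ fun i _ => hup i
  have h2 : (1 - n * δ) * I + δ * ∑ j, x j ≤ univ.inf' univ_nonempty (B *ᵥ x) :=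
    Finset.le_inf' _ _ fun i _ => hlo i
  linarith [h1, h2]

lemma key_conv {n : ℕ} [Nonempty (Fin n)] (A : Matrix (Fin n) (Fin n) ℝ)
    (hA0 : ∀ i j, 0 ≤ A i j) (hA1 : ∀ i, ∑ j, A i j = 1)
    (p : ℕ) (δ : ℝ) (hδ0 : 0 < δ) (hp : ∀ i j, δ ≤ (A ^ p) i j)
    (x : Fin n → ℝ) :
    ∃ L : ℝ, (∀ i, Tendsto (fun k => ((A ^ k) *ᵥ x) i) atTop (nhds L)) ∧
      ∀ t, ∃ i, ((A ^ t) *ᵥ x) i ≤ L := by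
  set g : ℕ → Fin n → ℝ := fun k => (A ^ k) *ᵥ x with hg
  set M : ℕ → ℝ := fun k => univ.sup' univ_nonempty (g k) with hM
  set m : ℕ → ℝ := fun k => univ.inf' univ_nonempty (g k) with hm
  have hstep : ∀ k, g (k + 1) = A *ᵥ g k := by
    intro k
    simp only [hg, Matrix.mulVec_mulVec, ← pow_succ']
  have hblock : ∀ k, g (k + p) = (A ^ p) *ᵥ g k := by
    intro k
    simp only [hg, Matrix.mulVec_mulVec, ← pow_add, Nat.add_comm k p]
  have hM_anti : Antitone M := by
    refine antitone_nat_of_succ_le fun k => ?_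
    refine Finset.sup'_le _ _ fun i _ => ?_
    rw [show g (k+1) = A *ᵥ g k from hstep k]
    exact mulVec_le_sup' A hA0 hA1 (g k) i
  have hm_mono : Monotone m := by
    refine monotone_nat_of_le_succ fun k => ?_
    refine Finset.le_inf' _ _ fun i _ => ?_
    rw [show g (k+1) = A *ᵥ g k from hstep k]
    exact inf'_le_mulVec A hA0 hA1 (g k) i
  have hmM : ∀ k, m k ≤ M k := fun k =>
    le_trans (Finset.inf'_le _ (Finset.mem_univ (Classical.arbitrary (Fin n))))
      (Finset.le_sup' _ (Finset.mem_univ (Classical.arbitrary (Fin n))))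
  have hMbdd : BddBelow (Set.range M) := ⟨m 0, by
    rintro _ ⟨k, rfl⟩; exact le_trans (hm_mono (Nat.zero_le k)) (hmM k)⟩
  set L : ℝ := ⨅ k, M k with hL
  have hML : Tendsto M atTop (nhds L) := tendsto_atTop_ciInf hM_anti hMbdd
  -- contraction constant
  have hn0 : (0 : ℝ) < n := by
    have i := Classical.arbitrary (Fin n)
    exact_mod_cast i.pos
  set c : ℝ := 1 - n * δ with hc
  have hApow1 : ∀ i, ∑ j, (A ^ p) i j = 1 := rowsum_pow A hA1 p
  have hc0 : 0 ≤ c := by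
    have i := Classical.arbitrary (Fin n)
    have : (n : ℝ) * δ = ∑ _j : Fin n, δ := by simp [mul_comm]
    have h2 : (n : ℝ) * δ ≤ 1 := by
      rw [this, ← hApow1 i]
      exact Finset.sum_le_sum fun j _ => hp i j
    linarith
  have hc1 : c < 1 := by
    have : 0 < (n : ℝ) * δ := mul_pos hn0 hδ0
    simp only [hc]; linarith
  set d : ℕ → ℝ := fun k => M k - m k with hd
  have hd0 : ∀ k, 0 ≤ d k := fun k => sub_nonneg.2 (hmM k)
  have hd_anti : Antitone d := fun a b hab =>
    sub_le_sub (hM_anti hab) (hm_mono hab)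
  have hcontr : ∀ k, d (k + p) ≤ c * d k := by
    intro k
    have := osc_contract (A ^ p) δ hApow1 hp (g k)
    rw [← hblock k] at this
    exact this
  have hgeom : ∀ r : ℕ, d (r * p) ≤ c ^ r * d 0 := by
    intro r
    induction r with
    | zero => simp
    | succ r ih =>
        have : d ((r + 1) * p) = d (r * p + p) := by ring_nf
        rw [this, pow_succ]
        calc d (r * p + p) ≤ c * d (r * p) := hcontr _
          _ ≤ c * (c ^ r * d 0) := mul_le_mul_of_nonneg_left ih hc0
          _ = c ^ r * c * d 0 := by ring
  have hdbdd : BddBelow (Set.range d) := ⟨0, by rintro _ ⟨k, rfl⟩; exact hd0 k⟩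
  have hdL : Tendsto d atTop (nhds (⨅ k, d k)) := tendsto_atTop_ciInf hd_anti hdbdd
  have hsub0 : Tendsto (fun r => c ^ r * d 0) atTop (nhds 0) := by
    have := (tendsto_pow_atTop_nhds_zero_of_lt_one hc0 hc1).mul_const (d 0)
    simpa using this
  have hiInf : (⨅ k, d k) = 0 := by
    refine le_antisymm ?_ (le_ciInf hd0)
    refine ge_of_tendsto hsub0 ?_
    filter_upwards with r
    exact le_trans (ciInf_le hdbdd (r * p)) (hgeom r)
  rw [hiInf] at hdL
  have hm_tend : Tendsto m atTop (nhds L) := by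
    have := hML.sub hdL
    simpa [hd] using this
  refine ⟨L, fun i => ?_, fun t => ?_⟩
  · refine tendsto_of_tendsto_of_tendsto_of_le_of_le hm_tend hML ?_ ?_
    · intro k; exact Finset.inf'_le _ (Finset.mem_univ i)
    · intro k; exact Finset.le_sup' _ (Finset.mem_univ i)
  · obtain ⟨i, -, hi⟩ := Finset.exists_mem_eq_inf' (univ_nonempty) (g t)
    refine ⟨i, ?_⟩
    have h1 : m t ≤ L := hm_mono.ge_of_tendsto hm_tend t
    have h2 : m t = g t i := hi
    calc g t i = m t := h2.symm
      _ ≤ L := h1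


/-- `Phi Q s k` is the product `Q (s+k) * Q (s+k-1) * ⋯ * Q s`, i.e. `Φ(s+k, s)`. -/
def Phi {n : ℕ} (Q : ℕ → Matrix (Fin n) (Fin n) ℝ) (s : ℕ) : ℕ → Matrix (Fin n) (Fin n) ℝ
  | 0 => Q s
  | k + 1 => Q (s + k + 1) * Phi Q s k
lemma Phi_eq {n : ℕ} (P : Matrix (Fin n) (Fin n) ℝ)
    (y : ℕ → Fin n → ℝ) (hypos : ∀ t i, 0 < y t i)
    (Q : ℕ → Matrix (Fin n) (Fin n) ℝ)
    (hQ : ∀ t, Q t = Matrix.diagonal (fun i => (y (t + 1) i)⁻¹) * P * Matrix.diagonal (y t))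
    (s : ℕ) : ∀ k, Phi Q s k =
      Matrix.diagonal (fun i => (y (s + k + 1) i)⁻¹) * (P ^ (k + 1)) * Matrix.diagonal (y s) := by
  intro k
  induction k with
  | zero => simpa [Phi, pow_one] using hQ s
  | succ k ih =>
      have hcancel : Matrix.diagonal (y (s + k + 1)) *
          Matrix.diagonal (fun i => (y (s + k + 1) i)⁻¹) = 1 := by
        rw [Matrix.diagonal_mul_diagonal]
        convert Matrix.diagonal_one
        exact mul_inv_cancel₀ (hypos _ _).ne'
      show Q (s + k + 1) * Phi Q s k = _
      rw [ih, hQ (s + k + 1)]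
      have : s + (k + 1) + 1 = s + k + 1 + 1 := by ring
      rw [this]
      rw [pow_succ']
      simp only [Matrix.mul_assoc]
      rw [← Matrix.mul_assoc (Matrix.diagonal (y (s + k + 1)))
          (Matrix.diagonal fun i => (y (s + k + 1) i)⁻¹), hcancel, Matrix.one_mul]
      simp only [pow_succ', Matrix.mul_assoc]

theorem stmt_4 {n : ℕ} (P : Matrix (Fin n) (Fin n) ℝ)
    (hnonneg : ∀ i j, 0 ≤ P i j)
    (hcol : ∀ j, ∑ i, P i j = 1)
    (hprim : ∃ k : ℕ, ∀ i j, 0 < (P ^ k) i j)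
    (y : ℕ → Fin n → ℝ)
    (hy : ∀ t, y t = (P ^ t) *ᵥ (fun _ => (1 : ℝ)))
    (hypos : ∀ t i, 0 < y t i)
    (Q : ℕ → Matrix (Fin n) (Fin n) ℝ)
    (hQ : ∀ t, Q t = Matrix.diagonal (fun i => (y (t + 1) i)⁻¹) * P * Matrix.diagonal (y t)) :
    ∀ s : ℕ,
      Tendsto (fun k => Phi Q s k) atTop
        (nhds (Matrix.of fun _ j => y s j / n))
      ∧ (∀ i j : Fin n, 0 ≤ (Matrix.of fun _ j => y s j / n) i j)
      ∧ (∀ i : Fin n, ∑ j, (Matrix.of fun _ j => y s j / n) i j = 1) := by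
  intro s
  -- sum of y s is n
  have hsumy : ∑ j, y s j = n := by
    have : ∀ j, y s j = ∑ l, (P ^ s) j l := by
      intro j; rw [hy s]; simp [Matrix.mulVec, dotProduct]
    calc ∑ j, y s j = ∑ j, ∑ l, (P ^ s) j l := by simp [this]
      _ = ∑ l, ∑ j, (P ^ s) j l := Finset.sum_comm
      _ = ∑ _l : Fin n, (1 : ℝ) := by
          exact Finset.sum_congr rfl fun l _ => colsum_pow P hcol s l
      _ = n := by simp
  refine ⟨?_, ?_, ?_⟩
  · -- the convergence
    rcases Nat.eq_zero_or_pos n with hn | hn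
    · subst hn
      have : (fun k => Phi Q s k) = fun _ => (Matrix.of fun _ j => y s j / (0:ℕ)) := by
        funext k; ext i j; exact i.elim0
      rw [this]
      exact tendsto_const_nhds
    haveI : Nonempty (Fin n) := Fin.pos_iff_nonempty.mp hn
    obtain ⟨p, hk0⟩ := hprim
    set A : Matrix (Fin n) (Fin n) ℝ := Pᵀ with hA
    have hA0 : ∀ i j, 0 ≤ A i j := fun i j => hnonneg j i
    have hA1 : ∀ i, ∑ j, A i j = 1 := fun i => hcol i
    have hApk : ∀ i j, (A ^ p) i j = (P ^ p) j i := by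
      intro i j; rw [hA, ← Matrix.transpose_pow]; rfl
    set δ : ℝ := (univ : Finset (Fin n × Fin n)).inf' univ_nonempty
      (fun q => (A ^ p) q.1 q.2) with hδ
    have hδ0 : 0 < δ := by
      rw [hδ, Finset.lt_inf'_iff]
      rintro ⟨i, j⟩ -
      rw [hApk]; exact hk0 j i
    have hpδ : ∀ i j, δ ≤ (A ^ p) i j := fun i j =>
      Finset.inf'_le _ (Finset.mem_univ (i, j))
    -- limits of entries of P^k
    have hkey : ∀ i : Fin n, ∃ L : ℝ,
        (∀ j, Tendsto (fun k => ((A ^ k) *ᵥ Pi.single i 1) j) atTop (nhds L)) ∧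
        ∀ t, ∃ j, ((A ^ t) *ᵥ Pi.single i 1) j ≤ L :=
      fun i => key_conv A hA0 hA1 p δ hδ0 hpδ (Pi.single i 1)
    choose L hL1 hL2 using hkey
    have hentry : ∀ (k : ℕ) (i j : Fin n), ((A ^ k) *ᵥ Pi.single i 1) j = (P ^ k) i j := by
      intro k i j
      rw [Matrix.mulVec_single, hA, ← Matrix.transpose_pow]
      simp [Matrix.transpose_apply]
      rw [← Matrix.transpose_pow]; rfl
    have hPk : ∀ i j, Tendsto (fun k => (P ^ k) i j) atTop (nhds (L i)) := by
      intro i j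
      have := hL1 i j
      simpa [hentry] using this
    have hLpos : ∀ i, 0 < L i := by
      intro i
      obtain ⟨j, hj⟩ := hL2 i p
      rw [hentry] at hj
      exact lt_of_lt_of_le (hk0 i j) hj
    -- denominator formula
    have hyform : ∀ k i, y (s + k + 1) i = ∑ j, (P ^ (k + 1)) i j * y s j := by
      intro k i
      have h1 : y (s + k + 1) = (P ^ (k + 1)) *ᵥ y s := by
        rw [hy (s + k + 1), hy s, Matrix.mulVec_mulVec, ← pow_add,
          show k + 1 + s = s + k + 1 from by ring]
      rw [h1]; rfl
    have hden : ∀ i, Tendsto (fun k => y (s + k + 1) i) atTop (nhds (L i * n)) := by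
      intro i
      have hterm : ∀ j : Fin n, Tendsto (fun k => (P ^ (k + 1)) i j * y s j) atTop
          (nhds (L i * y s j)) := by
        intro j
        have : Tendsto (fun k => (P ^ (k + 1)) i j) atTop (nhds (L i)) :=
          (hPk i j).comp (tendsto_add_atTop_nat 1)
        exact this.mul_const (y s j)
      have hsum := tendsto_finset_sum (univ : Finset (Fin n)) (fun j _ => hterm j)
      have heq : ∑ j, L i * y s j = L i * n := by
        rw [← Finset.mul_sum, hsumy]
      simp only [hyform]
      rw [← heq]
      exact hsum
    -- entrywise convergence of Phi
    refine tendsto_pi_nhds.mpr ?_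
    intro i
    rw [tendsto_pi_nhds]
    intro j
    have hPhi : ∀ k, Phi Q s k i j =
        ((P ^ (k + 1)) i j * y s j) / y (s + k + 1) i := by
      intro k
      rw [Phi_eq P y hypos Q hQ s k]
      simp only [Matrix.mul_diagonal, Matrix.diagonal_mul, div_eq_mul_inv]
      ring
    have hne : L i * n ≠ 0 := by
      have : (0:ℝ) < n := by exact_mod_cast hn
      exact (mul_pos (hLpos i) this).ne'
    have hnum : Tendsto (fun k => (P ^ (k + 1)) i j * y s j) atTop
        (nhds (L i * y s j)) :=
      ((hPk i j).comp (tendsto_add_atTop_nat 1)).mul_const (y s j)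
    have hdiv := hnum.div (hden i) hne
    have hlim : (L i * y s j) / (L i * n) = y s j / n := by
      rw [mul_div_mul_left _ _ (hLpos i).ne']
    simp only [hPhi]
    rw [show (Matrix.of fun _ j => y s j / (n:ℕ)) i j = y s j / n from rfl, ← hlim]
    exact hdiv
  · intro i j
    exact div_nonneg (hypos s j).le (Nat.cast_nonneg n)
  · intro i
    have hn : (0:ℝ) < n := by exact_mod_cast i.pos
    simp only [Matrix.of_apply]
    rw [← Finset.sum_div, hsumy, div_self hn.ne']
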